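/- arXiv:1905.13490 — 3 statements merged into one kernel-verified Lean document; each statement's English description precedes it below -/
import Mathlib

section
/- Let Y be a real Hilbert space with norm ‖y‖²_{α,ρ} = ‖Ty‖²_G + α‖E₀y‖²_{H₀} + ρ(‖B₁y‖²_{L₁} + ‖B₂y‖²_{L₂}), ρ > 0, and Λ = L₁ × L₂. Assume: (i) ‖Ty‖_G ≤ C_obs (‖B₁y‖²+‖B₂y‖²+‖E₀y‖²)^{1/2} for all y, and (ii) for every (λ₁,λ₂) ∈ Λ there exists ŷ ∈ Y with B₁ŷ = λ₁, B₂ŷ = λ₂, E₀ŷ = 0. Then for every nonzero λ ∈ Λ, sup_{0≠y∈Y} b(y,λ)/‖y‖_{α,ρ} ≥ ‖λ‖_Λ / √(C_obs² + ρ), where b(y,λ) = ⟨B₁y,λ₁⟩ + ⟨B₂y,λ₂⟩. -/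
open scoped RealInnerProductSpace

/-- Fourth Brezzi condition (inf-sup): for every nonzero multiplier `λ`
there is a nonzero `y` with `b(y,λ)/‖y‖_{α,ρ} ≥ ‖λ‖_Λ/√(C_obs² + ρ)`. -/
theorem stmt6 {Y G H₀ L₁ L₂ : Type*}
    [NormedAddCommGroup Y] [InnerProductSpace ℝ Y] [CompleteSpace Y]
    [NormedAddCommGroup G] [InnerProductSpace ℝ G]
    [NormedAddCommGroup H₀] [InnerProductSpace ℝ H₀]
    [NormedAddCommGroup L₁] [InnerProductSpace ℝ L₁]
    [NormedAddCommGroup L₂] [InnerProductSpace ℝ L₂]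
    (T : Y →L[ℝ] G) (E₀ : Y →L[ℝ] H₀) (B₁ : Y →L[ℝ] L₁) (B₂ : Y →L[ℝ] L₂)
    (α ρ C_obs : ℝ) (hα : 0 < α) (hρ : 0 < ρ) (hC : 0 ≤ C_obs)
    (hobs : ∀ y : Y, ‖T y‖ ≤
      C_obs * Real.sqrt (‖B₁ y‖ ^ 2 + ‖B₂ y‖ ^ 2 + ‖E₀ y‖ ^ 2))
    (hsolve : ∀ lam : L₁ × L₂, ∃ yhat : Y,
      B₁ yhat = lam.1 ∧ B₂ yhat = lam.2 ∧ E₀ yhat = 0) :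
    let N : Y → ℝ := fun y => Real.sqrt (‖T y‖ ^ 2 + α * ‖E₀ y‖ ^ 2 +
      ρ * (‖B₁ y‖ ^ 2 + ‖B₂ y‖ ^ 2))
    ∀ lam : L₁ × L₂, lam ≠ 0 → ∃ y : Y, y ≠ 0 ∧
      (⟪B₁ y, lam.1⟫ + ⟪B₂ y, lam.2⟫) / N y ≥
        Real.sqrt (‖lam.1‖ ^ 2 + ‖lam.2‖ ^ 2) /
          Real.sqrt (C_obs ^ 2 + ρ) := by
  intro N lam hlam
  obtain ⟨y, hB1, hB2, hE0⟩ := hsolve lam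
  -- S² := ‖λ₁‖² + ‖λ₂‖²
  set s2 : ℝ := ‖lam.1‖ ^ 2 + ‖lam.2‖ ^ 2 with hs2
  have hs2pos : 0 < s2 := by
    rcases (by simpa [Prod.ext_iff] using hlam : ¬(lam.1 = 0 ∧ lam.2 = 0)) with h
    have h1 : 0 ≤ ‖lam.1‖ ^ 2 := sq_nonneg _
    have h2 : 0 ≤ ‖lam.2‖ ^ 2 := sq_nonneg _
    by_contra hle
    push_neg at hle
    have e1 : ‖lam.1‖ ^ 2 = 0 := le_antisymm (by linarith) h1
    have e2 : ‖lam.2‖ ^ 2 = 0 := le_antisymm (by linarith) h2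
    exact h ⟨by simpa using (pow_eq_zero_iff (n := 2) (by norm_num)).mp e1,
      by simpa using (pow_eq_zero_iff (n := 2) (by norm_num)).mp e2⟩
  have hy0 : y ≠ 0 := by
    intro h
    rw [h] at hB1 hB2
    simp at hB1 hB2
    have : s2 = 0 := by simp [hs2, ← hB1, ← hB2]
    linarith
  refine ⟨y, hy0, ?_⟩
  have hb : ⟪B₁ y, lam.1⟫ + ⟪B₂ y, lam.2⟫ = s2 := by
    rw [hB1, hB2, real_inner_self_eq_norm_sq, real_inner_self_eq_norm_sq, hs2]
  have hT : ‖T y‖ ^ 2 ≤ C_obs ^ 2 * s2 := by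
    have h := hobs y
    rw [hB1, hB2, hE0] at h
    have hsq : ‖T y‖ ^ 2 ≤ (C_obs * Real.sqrt (‖lam.1‖ ^ 2 + ‖lam.2‖ ^ 2 + ‖(0 : H₀)‖ ^ 2)) ^ 2 :=
      pow_le_pow_left₀ (norm_nonneg _) h 2
    calc ‖T y‖ ^ 2 ≤ _ := hsq
      _ = C_obs ^ 2 * s2 := by
          rw [mul_pow, Real.sq_sqrt (by positivity)]
          simp [hs2]
  have hNle : N y ≤ Real.sqrt (C_obs ^ 2 + ρ) * Real.sqrt s2 := by
    rw [← Real.sqrt_mul (by positivity)]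
    apply Real.sqrt_le_sqrt
    rw [hE0]
    simp only [norm_zero]
    have : ‖B₁ y‖ ^ 2 + ‖B₂ y‖ ^ 2 = s2 := by rw [hB1, hB2]
    rw [this]
    nlinarith
  have hNpos : 0 < N y := by
    apply Real.sqrt_pos.mpr
    have : ‖B₁ y‖ ^ 2 + ‖B₂ y‖ ^ 2 = s2 := by rw [hB1, hB2]
    nlinarith [sq_nonneg ‖T y‖, sq_nonneg ‖E₀ y‖]
  rw [hb]
  have hCpos : 0 < Real.sqrt (C_obs ^ 2 + ρ) := Real.sqrt_pos.mpr (by positivity)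
  have hspos : 0 < Real.sqrt s2 := Real.sqrt_pos.mpr hs2pos
  have key : s2 / N y ≥ s2 / (Real.sqrt (C_obs ^ 2 + ρ) * Real.sqrt s2) :=
    div_le_div_of_nonneg_left (le_of_lt hs2pos) hNpos hNle
  refine le_trans (le_of_eq ?_) key
  rw [← Real.mul_self_sqrt hs2pos.le]
  field_simp
  simp [Real.sqrt_sq hspos.le]
end

section
/- Let Y, Λ be real Hilbert spaces, b : Y×Λ → ℝ a bounded bilinear form satisfying the inf-sup condition with constant k₀ with respect to the norm ‖·‖_{α,ρ} on Y. Let Y_h ⊆ Y be a closed subspace, and suppose Λ_h := {(B₁ y_h, B₂ y_h) : y_h ∈ Y_h, E₀ y_h = 0} ⊆ Λ (where b(y,λ) = ⟨B₁y,λ₁⟩ + ⟨B₂y,λ₂⟩ and ‖Ty‖ ≤ C_obs(‖B₁y‖²+‖B₂y‖²+‖E₀y‖²)^{1/2}). Then the restricted form b on Y_h × Λ_h satisfies the discrete inf-sup condition sup_{0≠y_h∈Y_h} b(y_h,λ_h)/‖y_h‖_{α,ρ} ≥ ‖λ_h‖_Λ / √(C_obs²+ρ) for all λ_h ∈ Λ_h.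 -/
open scoped RealInnerProductSpace

/-- Discrete inf-sup condition: for a conforming subspace `Y_h` and the
multiplier space `Λ_h = {(B₁ y_h, B₂ y_h) : y_h ∈ Y_h, E₀ y_h = 0}`, the
constraint form `b` satisfies the inf-sup condition on `Y_h × Λ_h` with the
same constant `k₀ = 1/√(C_obs² + ρ)` as in the continuous setting. -/
theorem stmt10 {Y G H₀ L₁ L₂ : Type*}
    [NormedAddCommGroup Y] [InnerProductSpace ℝ Y] [CompleteSpace Y]
    [NormedAddCommGroup G] [InnerProductSpace ℝ G]
    [NormedAddCommGroup H₀] [InnerProductSpace ℝ H₀]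
    [NormedAddCommGroup L₁] [InnerProductSpace ℝ L₁]
    [NormedAddCommGroup L₂] [InnerProductSpace ℝ L₂]
    (T : Y →L[ℝ] G) (E₀ : Y →L[ℝ] H₀) (B₁ : Y →L[ℝ] L₁) (B₂ : Y →L[ℝ] L₂)
    (α ρ C_obs : ℝ) (hα : 0 < α) (hρ : 0 < ρ) (hC : 0 ≤ C_obs)
    (hobs : ∀ y : Y, ‖T y‖ ≤
      C_obs * Real.sqrt (‖B₁ y‖ ^ 2 + ‖B₂ y‖ ^ 2 + ‖E₀ y‖ ^ 2))
    (Yh : Submodule ℝ Y) (hYh : IsClosed (Yh : Set Y)) :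
    let N : Y → ℝ := fun y => Real.sqrt (‖T y‖ ^ 2 + α * ‖E₀ y‖ ^ 2 +
      ρ * (‖B₁ y‖ ^ 2 + ‖B₂ y‖ ^ 2))
    ∀ lam : L₁ × L₂,
      (∃ yh ∈ Yh, E₀ yh = 0 ∧ lam = (B₁ yh, B₂ yh)) →
      lam ≠ 0 →
      ∃ y ∈ Yh, y ≠ 0 ∧
        (⟪B₁ y, lam.1⟫ + ⟪B₂ y, lam.2⟫) / N y ≥
          Real.sqrt (‖lam.1‖ ^ 2 + ‖lam.2‖ ^ 2) /
            Real.sqrt (C_obs ^ 2 + ρ) := by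
  intro N lam hex hne
  obtain ⟨yh, hyhY, hE0, hlam⟩ := hex
  have hyh0 : yh ≠ 0 := by
    rintro rfl
    apply hne
    simp [hlam]
  refine ⟨yh, hyhY, hyh0, ?_⟩
  subst hlam
  simp only [real_inner_self_eq_norm_sq]
  set a : ℝ := ‖B₁ yh‖ ^ 2 + ‖B₂ yh‖ ^ 2 with ha_def
  have ha0 : 0 ≤ a := by positivity
  have ha : 0 < a := by
    rcases lt_or_eq_of_le ha0 with h | h
    · exact h
    · exfalso
      apply hne
      have h1 : ‖B₁ yh‖ = 0 ∧ ‖B₂ yh‖ = 0 := by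
        constructor <;> nlinarith [sq_nonneg ‖B₁ yh‖, sq_nonneg ‖B₂ yh‖, norm_nonneg (B₁ yh), norm_nonneg (B₂ yh)]
      simp [Prod.ext_iff, norm_eq_zero.mp h1.1, norm_eq_zero.mp h1.2]
  have hE0n : ‖E₀ yh‖ = 0 := by rw [hE0, norm_zero]
  have hT : ‖T yh‖ ≤ C_obs * Real.sqrt a := by
    have := hobs yh
    rw [hE0n] at this
    simpa using this
  have hT2 : ‖T yh‖ ^ 2 ≤ C_obs ^ 2 * a := by
    have h1 : ‖T yh‖ ^ 2 ≤ (C_obs * Real.sqrt a) ^ 2 := by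
      apply sq_le_sq' _ hT
      nlinarith [norm_nonneg (T yh), mul_nonneg hC (Real.sqrt_nonneg a)]
    have h2 : (C_obs * Real.sqrt a) ^ 2 = C_obs ^ 2 * a := by
      rw [mul_pow, Real.sq_sqrt ha0]
    linarith
  have hNval : N yh = Real.sqrt (‖T yh‖ ^ 2 + ρ * a) := by
    simp only [N, hE0n]
    rw [ha_def]
    ring_nf
  have hNpos : 0 < N yh := by
    rw [hNval]
    apply Real.sqrt_pos.mpr
    nlinarith [sq_nonneg ‖T yh‖]
  have hNle : N yh ≤ Real.sqrt ((C_obs ^ 2 + ρ) * a) := by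
    rw [hNval]
    apply Real.sqrt_le_sqrt
    nlinarith
  have hCρ : 0 < Real.sqrt (C_obs ^ 2 + ρ) := Real.sqrt_pos.mpr (by nlinarith)
  rw [ge_iff_le, div_le_div_iff₀ hCρ hNpos]
  have key : Real.sqrt ((C_obs ^ 2 + ρ) * a) = Real.sqrt (C_obs ^ 2 + ρ) * Real.sqrt a := by
    rw [Real.sqrt_mul (by nlinarith)]
  calc Real.sqrt a * N yh ≤ Real.sqrt a * (Real.sqrt (C_obs ^ 2 + ρ) * Real.sqrt a) := by
        rw [← key]; exact mul_le_mul_of_nonneg_left hNle (Real.sqrt_nonneg a)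
    _ = (Real.sqrt a * Real.sqrt a) * Real.sqrt (C_obs ^ 2 + ρ) := by ring
    _ = a * Real.sqrt (C_obs ^ 2 + ρ) := by rw [Real.mul_self_sqrt ha0]
end

section
/- Let X be a real Hilbert space, A : X → X' bounded, self-adjoint, boundedly invertible, and X_h ⊆ X a closed subspace such that the restricted operator A_h : X_h → X_h' (defined by ⟨A_h x_h, w_h⟩ = ⟨A x_h, w_h⟩) satisfies ‖A_h‖ ≤ c̄ and ‖A_h⁻¹‖ ≤ 1/c̲ with constants independent of the choice of X_h. Let P_h : X_h → X_h' be the Riesz map of X_h with the inherited inner product. Then P_h⁻¹A_h : X_h → X_h is a self-adjoint isomorphism and its condition number κ(P_h⁻¹A_h) = ‖A_h‖·‖A_h⁻¹‖ ≤ c̄/c̲ is bounded independently of X_h. -/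
open scoped RealInnerProductSpace
open NormedSpace

set_option synthInstance.maxHeartbeats 1000000 in
set_option maxHeartbeats 1600000 in
/-- Discrete operator preconditioning: if the restriction `A_h` of a bounded
self-adjoint operator `A : X → X'` to a closed subspace `X_h` satisfies
`‖A_h‖ ≤ c̄` and is invertible with `‖A_h⁻¹‖ ≤ 1/c̲`, then the
Riesz-preconditioned operator `P_h⁻¹A_h : X_h → X_h` (characterized by
`⟪P_h⁻¹A_h x, w⟫ = ⟨A x, w⟩` for `x, w ∈ X_h`) is a self-adjoint isomorphism
with condition number `‖P_h⁻¹A_h‖·‖(P_h⁻¹A_h)⁻¹‖ ≤ c̄/c̲`. -/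
theorem stmt11 {X : Type*}
    [NormedAddCommGroup X] [InnerProductSpace ℝ X] [CompleteSpace X]
    (A : X →L[ℝ] StrongDual ℝ X)
    (hsym : ∀ x w : X, A x w = A w x)
    (Xh : Submodule ℝ X) (hXh : IsClosed (Xh : Set X))
    (cbar cund : ℝ) (hcbar : 0 < cbar) (hcund : 0 < cund)
    (hAh_bdd : ∀ x w : Xh, |A (x : X) (w : X)| ≤ cbar * ‖x‖ * ‖w‖)
    (hAh_inv : ∀ x : Xh, ∃ w : Xh, ‖w‖ ≤ 1 ∧ cund * ‖x‖ ≤ A (x : X) (w : X)) :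
    ∃ M Minv : Xh →L[ℝ] Xh,
      (∀ x w : Xh, ⟪M x, w⟫ = A (x : X) (w : X)) ∧
      (∀ x w : Xh, ⟪M x, w⟫ = ⟪x, M w⟫) ∧
      Function.Bijective M ∧
      (∀ x : Xh, Minv (M x) = x) ∧ (∀ x : Xh, M (Minv x) = x) ∧
      ‖M‖ ≤ cbar ∧ ‖Minv‖ ≤ 1 / cund ∧
      ‖M‖ * ‖Minv‖ ≤ cbar / cund := by
  haveI : CompleteSpace Xh := hXh.completeSpace_coe
  let B : Xh →L[ℝ] StrongDual ℝ Xh :=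
    (((ContinuousLinearMap.compL ℝ Xh X ℝ).flip Xh.subtypeL).comp A).comp Xh.subtypeL
  let M : Xh →L[ℝ] Xh :=
    { toFun := fun x => (InnerProductSpace.toDual ℝ Xh).symm (B x)
      map_add' := by intro a b; simp
      map_smul' := by intro r a; simp
      cont := (InnerProductSpace.toDual ℝ Xh).symm.continuous.comp B.continuous }
  have h1 : ∀ x w : Xh, ⟪M x, w⟫ = A (x : X) (w : X) := by
    intro x w
    simp [M, B, InnerProductSpace.toDual_symm_apply]
  have h2 : ∀ x w : Xh, ⟪M x, w⟫ = ⟪x, M w⟫ := by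
    intro x w
    rw [h1, real_inner_comm, h1, hsym]
  -- upper bound
  have hub : ∀ x : Xh, ‖M x‖ ≤ cbar * ‖x‖ := by
    intro x
    rcases eq_or_ne (M x) 0 with h | h
    · simp [h]; positivity
    · have hn : 0 < ‖M x‖ := norm_pos_iff.mpr h
      have : ‖M x‖ * ‖M x‖ ≤ (cbar * ‖x‖) * ‖M x‖ := by
        have := h1 x (M x)
        calc ‖M x‖ * ‖M x‖ = ⟪M x, M x⟫ := (real_inner_self_eq_norm_mul_norm _).symm
          _ = A (x : X) ((M x : X)) := h1 x (M x)
          _ ≤ |A (x : X) ((M x : X))| := le_abs_self _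
          _ ≤ cbar * ‖x‖ * ‖M x‖ := hAh_bdd x (M x)
      exact le_of_mul_le_mul_right this hn
  have hM : ‖M‖ ≤ cbar := M.opNorm_le_bound hcbar.le hub
  -- lower bound
  have hlb : ∀ x : Xh, cund * ‖x‖ ≤ ‖M x‖ := by
    intro x
    obtain ⟨w, hw1, hw2⟩ := hAh_inv x
    calc cund * ‖x‖ ≤ A (x : X) (w : X) := hw2
      _ = ⟪M x, w⟫ := (h1 x w).symm
      _ ≤ ‖M x‖ * ‖w‖ := real_inner_le_norm _ _
      _ ≤ ‖M x‖ * 1 := by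
          exact mul_le_mul_of_nonneg_left hw1 (norm_nonneg _)
      _ = ‖M x‖ := mul_one _
  have hinj : Function.Injective M := by
    intro a b hab
    have : M (a - b) = 0 := by rw [map_sub, hab, sub_self]
    have h0 := hlb (a - b)
    rw [this, norm_zero] at h0
    have : ‖a - b‖ ≤ 0 := by nlinarith [norm_nonneg (a - b)]
    have := le_antisymm this (norm_nonneg _)
    rwa [norm_eq_zero, sub_eq_zero] at this
  -- antilipschitz and closed range
  have hanti : AntilipschitzWith ⟨cund⁻¹, by positivity⟩ M := by
    apply ContinuousLinearMap.antilipschitz_of_bound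
    intro x
    have := hlb x
    show ‖x‖ ≤ cund⁻¹ * ‖M x‖
    rw [inv_mul_eq_div, le_div_iff₀ hcund, mul_comm]
    exact this
  have hclosed : IsClosed (Set.range M) := hanti.isClosed_range M.uniformContinuous
  -- surjectivity
  have hsurj : Function.Surjective M := by
    have horth : (LinearMap.range (M : Xh →ₗ[ℝ] Xh))ᗮ = ⊥ := by
      rw [Submodule.eq_bot_iff]
      intro y hy
      have hMy : M y = 0 := by
        have hall : ∀ x : Xh, ⟪x, M y⟫ = 0 := by
          intro x
          have h0 : ⟪M x, y⟫ = 0 :=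
            (Submodule.mem_orthogonal _ _).mp hy (M x) ⟨x, rfl⟩
          rw [h2] at h0
          exact h0
        have := hall (M y)
        rwa [real_inner_comm, inner_self_eq_zero] at this
      have := hinj (hMy.trans (map_zero M).symm)
      exact this
    have htop : (LinearMap.range (M : Xh →ₗ[ℝ] Xh)).topologicalClosure = ⊤ :=
      Submodule.topologicalClosure_eq_top_iff.mpr horth
    have hcl : (LinearMap.range (M : Xh →ₗ[ℝ] Xh)).topologicalClosure = LinearMap.range (M : Xh →ₗ[ℝ] Xh) := by
      apply IsClosed.submodule_topologicalClosure_eq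
      exact hclosed
    rw [hcl] at htop
    exact LinearMap.range_eq_top.mp htop
  have hbij : Function.Bijective M := ⟨hinj, hsurj⟩
  let E : Xh ≃L[ℝ] Xh := ContinuousLinearEquiv.ofBijective M
    (LinearMap.ker_eq_bot.mpr hinj) (LinearMap.range_eq_top.mpr hsurj)
  have hE : ∀ x : Xh, E x = M x := fun x => rfl
  let Minv : Xh →L[ℝ] Xh := E.symm.toContinuousLinearMap
  have hMinv : ‖Minv‖ ≤ 1 / cund := by
    apply ContinuousLinearMap.opNorm_le_bound _ (by positivity)
    intro y
    have h := hlb (E.symm y)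
    have hy : M (E.symm y) = y := by rw [← hE]; exact E.apply_symm_apply y
    rw [hy] at h
    show ‖E.symm y‖ ≤ 1 / cund * ‖y‖
    rw [one_div, inv_mul_eq_div, le_div_iff₀ hcund, mul_comm]
    exact h
  refine ⟨M, Minv, h1, h2, hbij, ?_, ?_, hM, hMinv, ?_⟩
  · intro x
    show E.symm (M x) = x
    rw [← hE]; exact E.symm_apply_apply x
  · intro x
    show M (E.symm x) = x
    rw [← hE]; exact E.apply_symm_apply x
  · have hnn : (0:ℝ) ≤ ‖Minv‖ := ContinuousLinearMap.opNorm_nonneg _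
    calc ‖M‖ * ‖Minv‖ ≤ cbar * (1 / cund) :=
          mul_le_mul hM hMinv hnn hcbar.le
      _ = cbar / cund := by ring
end
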